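/- arXiv:1706.08490 — 5 statements merged into one kernel-verified Lean document; each statement's English description precedes it below -/
import Mathlib

section
/- For every α ∈ (0, 1/2) and every μ > 0, the wave speed c*(α, μ) = (1 − 2α)/√(μ + (α − α²)(μ − 1)²) satisfies 0 < c*(α, μ) < √(1/μ); equivalently, μ·c*(α, μ)² < 1. (The proof reduces to the identity μ(1 − 2α)² + 4μ(α − α²) + (α − α²)(μ − 1)² − μ − (α − α²)(μ − 1)² = −(α − α²)(μ + 1)² < 0, i.e. to (α − α²)(μ + 1)² > 0.) -/
/-- For every `α ∈ (0, 1/2)` and every `μ > 0`, the wave speed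
`c*(α, μ) = (1 − 2α)/√(μ + (α − α²)(μ − 1)²)` satisfies `0 < c* < √(1/μ)`;
equivalently `μ·(c*)² < 1`. -/
theorem mckean_wave_speed_subcharacteristic (α μ : ℝ)
    (hα : α ∈ Set.Ioo (0 : ℝ) (1 / 2)) (hμ : 0 < μ) :
    let c : ℝ := (1 - 2 * α) / Real.sqrt (μ + (α - α ^ 2) * (μ - 1) ^ 2)
    0 < c ∧ c < Real.sqrt (1 / μ) ∧ μ * c ^ 2 < 1 := by
  obtain ⟨h0, h2⟩ := hα
  have ha : 0 < α - α ^ 2 := by nlinarith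
  have hnum : 0 < 1 - 2 * α := by linarith
  have hD : 0 < μ + (α - α ^ 2) * (μ - 1) ^ 2 := by positivity
  have hsD : 0 < Real.sqrt (μ + (α - α ^ 2) * (μ - 1) ^ 2) := Real.sqrt_pos.mpr hD
  intro c
  have hc : 0 < c := div_pos hnum hsD
  have hc2 : c ^ 2 = (1 - 2 * α) ^ 2 / (μ + (α - α ^ 2) * (μ - 1) ^ 2) := by
    simp only [c, div_pow, Real.sq_sqrt hD.le]
  have hkey : μ * c ^ 2 < 1 := by
    rw [hc2, mul_div_assoc', div_lt_one hD]
    nlinarith [sq_nonneg (μ + 1)]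
  refine ⟨hc, ?_, hkey⟩
  have h1 : c ^ 2 < 1 / μ := by
    rw [lt_div_iff₀ hμ]; linarith [hkey]
  calc c = Real.sqrt (c ^ 2) := by rw [Real.sqrt_sq hc.le]
    _ < Real.sqrt (1 / μ) := Real.sqrt_lt_sqrt (sq_nonneg c) h1
end

section
/- Fix α ∈ (0, 1/2) and μ > 0, and set γ(c) = c²μ − 1, β(c) = −c(1 + μ). Then c = (1 − 2α)/√(μ + (α − α²)(μ − 1)²) is the unique positive real number satisfying the C¹-matching condition γ(c)/β(c)² = (α² − α)/(2α − 1)². In particular μ + (α − α²)(μ − 1)² > 0, so the formula is well defined. -/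
/-- For `α ∈ (0, 1/2)` and `μ > 0`, with `γ(c) = c²μ − 1` and
`β(c) = −c(1+μ)`, the number `c = (1 − 2α)/√(μ + (α − α²)(μ − 1)²)` is the unique
positive real satisfying the C¹-matching condition `γ(c)/β(c)² = (α² − α)/(2α − 1)²`;
in particular `μ + (α − α²)(μ − 1)² > 0`, so the formula is well defined. -/
theorem mckean_wave_speed_unique (α μ : ℝ)
    (hα : α ∈ Set.Ioo (0 : ℝ) (1 / 2)) (hμ : 0 < μ) :
    0 < μ + (α - α ^ 2) * (μ - 1) ^ 2 ∧
    (let c₀ : ℝ := (1 - 2 * α) / Real.sqrt (μ + (α - α ^ 2) * (μ - 1) ^ 2)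
     0 < c₀ ∧
     (c₀ ^ 2 * μ - 1) / (-c₀ * (1 + μ)) ^ 2 = (α ^ 2 - α) / (2 * α - 1) ^ 2 ∧
     ∀ c : ℝ, 0 < c →
       (c ^ 2 * μ - 1) / (-c * (1 + μ)) ^ 2 = (α ^ 2 - α) / (2 * α - 1) ^ 2 →
       c = c₀) := by
  obtain ⟨hα0, hα2⟩ := hα
  have hαα : 0 < α - α ^ 2 := by nlinarith
  have hD : 0 < μ + (α - α ^ 2) * (μ - 1) ^ 2 := by positivity
  refine ⟨hD, ?_⟩
  intro c₀
  have hs : 0 < Real.sqrt (μ + (α - α ^ 2) * (μ - 1) ^ 2) := Real.sqrt_pos.mpr hD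
  have hs2 : Real.sqrt (μ + (α - α ^ 2) * (μ - 1) ^ 2) ^ 2
      = μ + (α - α ^ 2) * (μ - 1) ^ 2 := Real.sq_sqrt hD.le
  have h12 : 0 < 1 - 2 * α := by linarith
  have hc₀ : 0 < c₀ := div_pos h12 hs
  have h1μ : (0:ℝ) < 1 + μ := by linarith
  -- key: for c ≠ 0, the equation iff c^2 * D = (1-2α)^2
  have key : ∀ c : ℝ, c ≠ 0 →
      ((c ^ 2 * μ - 1) / (-c * (1 + μ)) ^ 2 = (α ^ 2 - α) / (2 * α - 1) ^ 2 ↔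
        c ^ 2 * (μ + (α - α ^ 2) * (μ - 1) ^ 2) = (1 - 2 * α) ^ 2) := by
    intro c hc
    have hb : (0:ℝ) < (-c * (1 + μ)) ^ 2 :=
      pow_two_pos_of_ne_zero (by simp [hc, h1μ.ne'])
    have hb2 : (0:ℝ) < (2 * α - 1) ^ 2 :=
      pow_two_pos_of_ne_zero (by intro h; nlinarith)
    rw [div_eq_div_iff hb.ne' hb2.ne']
    constructor
    · intro h; nlinarith [h]
    · intro h; nlinarith [h]
  have hc₀2 : c₀ ^ 2 * (μ + (α - α ^ 2) * (μ - 1) ^ 2) = (1 - 2 * α) ^ 2 := by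
    show ((1 - 2 * α) / Real.sqrt (μ + (α - α ^ 2) * (μ - 1) ^ 2)) ^ 2 * _ = _
    rw [div_pow, hs2]
    exact div_mul_cancel₀ _ hD.ne'
  refine ⟨hc₀, (key c₀ hc₀.ne').mpr hc₀2, ?_⟩
  intro c hc heq
  have h2 := (key c hc.ne').mp heq
  have hcc : c ^ 2 = c₀ ^ 2 := mul_right_cancel₀ hD.ne' (h2.trans hc₀2.symm)
  have h4 : c ≤ c₀ := by nlinarith [hcc]
  have h5 : c₀ ≤ c := by nlinarith [hcc]
  linarith
end

section
/- Fix α ∈ (0, 1/2) and μ > 0, let c = (1 − 2α)/√(μ + (α − α²)(μ − 1)²), set γ = c²μ − 1 and β = −c(1 + μ), and let λ₊ < 0 < λ₋ be the roots of γλ² + βλ + 1 = 0. Define U(z) = α·exp(λ₊ z) for z > 0 and U(z) = (α − 1)·exp(λ₋ z) + 1 for z ≤ 0. Then U is continuously differentiable on all of ℝ (in particular the one-sided derivatives at 0 agree: αλ₊ = (α − 1)λ₋), and for every z ≠ 0, U is twice differentiable at z and satisfies the nonlinear traveling-wave equation (c²μ − 1)U''(z) − c(1 + μ)U'(z) + U(z)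 = H(U(z) − α), where H(x) = 1 for x ≥ 0 and H(x) = 0 for x < 0. -/
set_option maxHeartbeats 800000

/-- For `α ∈ (0, 1/2)`, `μ > 0`, `c = (1 − 2α)/√(μ + (α − α²)(μ − 1)²)`,
`γ = c²μ − 1`, `β = −c(1+μ)`, and `λ₊ < 0 < λ₋` the roots of `γλ² + βλ + 1 = 0`, the
profile `U(z) = α·exp(λ₊ z)` for `z > 0`, `U(z) = (α − 1)·exp(λ₋ z) + 1` for `z ≤ 0`
is C¹ on ℝ (in particular `αλ₊ = (α − 1)λ₋`), and for every `z ≠ 0` it is twice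
differentiable at `z` and satisfies
`(c²μ − 1)U''(z) − c(1 + μ)U'(z) + U(z) = H(U(z) − α)`, where `H(x) = 1` for `x ≥ 0`
and `H(x) = 0` for `x < 0`. -/
theorem mckean_front_solves_travelling_wave_eq (α μ : ℝ)
    (hα : α ∈ Set.Ioo (0 : ℝ) (1 / 2)) (hμ : 0 < μ)
    (c : ℝ) (hc : c = (1 - 2 * α) / Real.sqrt (μ + (α - α ^ 2) * (μ - 1) ^ 2))
    (lp lm : ℝ)
    (hp : (c ^ 2 * μ - 1) * lp ^ 2 + (-c * (1 + μ)) * lp + 1 = 0)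
    (hm : (c ^ 2 * μ - 1) * lm ^ 2 + (-c * (1 + μ)) * lm + 1 = 0)
    (hlp : lp < 0) (hlm : 0 < lm)
    (U : ℝ → ℝ)
    (hU : ∀ z : ℝ, U z =
      if 0 < z then α * Real.exp (lp * z) else (α - 1) * Real.exp (lm * z) + 1) :
    ContDiff ℝ 1 U ∧
    α * lp = (α - 1) * lm ∧
    ∀ z : ℝ, z ≠ 0 →
      DifferentiableAt ℝ (deriv U) z ∧
      (c ^ 2 * μ - 1) * deriv (deriv U) z - c * (1 + μ) * deriv U z + U z =
        (if 0 ≤ U z - α then (1 : ℝ) else 0) := by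
  obtain ⟨hα0, hα2⟩ := hα
  have hα1 : α < 1 := by linarith
  have hKpos : 0 < μ + (α - α ^ 2) * (μ - 1) ^ 2 := by
    have h1 : 0 < α - α ^ 2 := by nlinarith
    nlinarith [mul_nonneg h1.le (sq_nonneg (μ - 1))]
  have hcpos : 0 < c := by
    rw [hc]
    exact div_pos (by linarith) (Real.sqrt_pos.mpr hKpos)
  have hcsq : c ^ 2 * (μ + (α - α ^ 2) * (μ - 1) ^ 2) = (1 - 2 * α) ^ 2 := by
    rw [hc, div_pow, Real.sq_sqrt hKpos.le]
    exact div_mul_cancel₀ _ hKpos.ne'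
  have hne : lp ≠ lm := ne_of_lt (lt_trans hlp hlm)
  have hsub : lp - lm ≠ 0 := sub_ne_zero.2 hne
  have h1 : (c ^ 2 * μ - 1) * (lp + lm) = c * (1 + μ) := by
    apply mul_left_cancel₀ hsub
    linear_combination hp - hm
  have h2 : (c ^ 2 * μ - 1) * (lp * lm) = 1 := by
    apply mul_left_cancel₀ hsub
    linear_combination lm * hp - lp * hm
  have hγ : c ^ 2 * μ - 1 < 0 := by
    nlinarith [mul_neg_of_neg_of_pos hlp hlm]
  have key : c ^ 2 * (1 + μ) ^ 2 * (α * (1 - α)) + (c ^ 2 * μ - 1) * (1 - 2 * α) ^ 2 = 0 := by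
    linear_combination hcsq
  have hE : (α * lp + (1 - α) * lm) * ((α - 1) * lp - α * lm) = 0 := by
    have h9 : (c ^ 2 * μ - 1) ^ 2 * ((α * lp + (1 - α) * lm) * ((α - 1) * lp - α * lm)) = 0 := by
      linear_combination (-(α * (1 - α)) * (c ^ 2 * μ - 1)) * hp
        + (-(α * (1 - α)) * (c ^ 2 * μ - 1)) * hm
        + (-(α * (1 - α)) * (c * (1 + μ))) * h1
        + (-(α ^ 2 + (1 - α) ^ 2) * (c ^ 2 * μ - 1)) * h2
        + (-1 : ℝ) * key
    have hg2 : (c ^ 2 * μ - 1) ^ 2 ≠ 0 := pow_ne_zero _ (ne_of_lt hγ)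
    exact (mul_eq_zero.mp h9).resolve_left hg2
  have hkey2 : α * lp = (α - 1) * lm := by
    have hS : lp + lm < 0 := by nlinarith [mul_pos hcpos (show (0:ℝ) < 1 + μ by linarith)]
    rcases mul_eq_zero.mp hE with h | h
    · linarith
    · exfalso
      nlinarith [mul_neg_of_pos_of_neg hα0 hS, mul_pos (show (0:ℝ) < 1 - 2 * α by linarith)
        (show (0:ℝ) < -lp by linarith)]
  -- analytic part
  have hAd : ∀ z : ℝ, HasDerivAt (fun y : ℝ => α * Real.exp (lp * y))
      (α * lp * Real.exp (lp * z)) z := by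
    intro z
    have h := (((hasDerivAt_id z).const_mul lp).exp).const_mul α
    simp only [id_eq, mul_one] at h
    exact h.congr_deriv (by ring)
  have hBd : ∀ z : ℝ, HasDerivAt (fun y : ℝ => (α - 1) * Real.exp (lm * y) + 1)
      ((α - 1) * lm * Real.exp (lm * z)) z := by
    intro z
    have h := ((((hasDerivAt_id z).const_mul lm).exp).const_mul (α - 1)).add_const 1
    simp only [id_eq, mul_one] at h
    exact h.congr_deriv (by ring)
  have hVA : ∀ z : ℝ, HasDerivAt U
      (if 0 < z then α * lp * Real.exp (lp * z) else (α - 1) * lm * Real.exp (lm * z)) z := by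
    intro z
    rcases lt_trichotomy z 0 with hz | hz | hz
    · rw [if_neg (not_lt.2 hz.le)]
      refine (hBd z).congr_of_eventuallyEq ?_
      filter_upwards [Iio_mem_nhds hz] with y hy
      rw [hU y, if_neg (not_lt.2 (le_of_lt (Set.mem_Iio.mp hy)))]
    · subst hz
      rw [if_neg (lt_irrefl 0), mul_zero, Real.exp_zero, mul_one]
      have hB0 := hBd 0
      rw [mul_zero, Real.exp_zero, mul_one] at hB0
      have hA0 := hAd 0
      rw [mul_zero, Real.exp_zero, mul_one, hkey2] at hA0
      have hBI : HasDerivWithinAt U ((α - 1) * lm) (Set.Iic 0) 0 := by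
        refine hB0.hasDerivWithinAt.congr ?_ ?_
        · intro y hy
          rw [hU y, if_neg (not_lt.2 (Set.mem_Iic.mp hy))]
        · rw [hU 0, if_neg (lt_irrefl 0)]
      have hAI : HasDerivWithinAt U ((α - 1) * lm) (Set.Ici 0) 0 := by
        refine hA0.hasDerivWithinAt.congr ?_ ?_
        · intro y hy
          rcases eq_or_lt_of_le (Set.mem_Ici.mp hy) with h0 | h0
          · rw [← h0, hU 0, if_neg (lt_irrefl 0)]
            simp
          · rw [hU y, if_pos h0]
        · rw [hU 0, if_neg (lt_irrefl 0)]
          simp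
      have h := hBI.union hAI
      rwa [Set.Iic_union_Ici, hasDerivWithinAt_univ] at h
    · rw [if_pos hz]
      refine (hAd z).congr_of_eventuallyEq ?_
      filter_upwards [Ioi_mem_nhds hz] with y hy
      rw [hU y, if_pos (Set.mem_Ioi.mp hy)]
  have hdiff : Differentiable ℝ U := fun z => (hVA z).differentiableAt
  have hderiv : deriv U = fun z =>
      if 0 < z then α * lp * Real.exp (lp * z) else (α - 1) * lm * Real.exp (lm * z) :=
    funext fun z => (hVA z).deriv
  have hVcont : Continuous (fun z : ℝ =>
      if 0 < z then α * lp * Real.exp (lp * z) else (α - 1) * lm * Real.exp (lm * z)) := by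
    have hVeq : (fun z : ℝ =>
        if 0 < z then α * lp * Real.exp (lp * z) else (α - 1) * lm * Real.exp (lm * z)) =
        fun z : ℝ =>
        if z ≤ 0 then (α - 1) * lm * Real.exp (lm * z) else α * lp * Real.exp (lp * z) := by
      funext z
      by_cases hz : 0 < z
      · rw [if_pos hz, if_neg (not_le.2 hz)]
      · rw [if_neg hz, if_pos (not_lt.1 hz)]
    rw [hVeq]
    apply Continuous.if_le
    · exact continuous_const.mul (Real.continuous_exp.comp (continuous_const.mul continuous_id))
    · exact continuous_const.mul (Real.continuous_exp.comp (continuous_const.mul continuous_id))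
    · exact continuous_id
    · exact continuous_const
    · intro x hx
      rw [hx]
      simp only [mul_zero, Real.exp_zero, mul_one]
      exact hkey2.symm
  refine ⟨contDiff_one_iff_deriv.mpr ⟨hdiff, hderiv ▸ hVcont⟩, hkey2, ?_⟩
  intro z hz
  rcases hz.lt_or_gt with hneg | hpos
  · have hD : HasDerivAt (deriv U) ((α - 1) * lm * (lm * Real.exp (lm * z))) z := by
      rw [hderiv]
      have h := (((hasDerivAt_id z).const_mul lm).exp).const_mul ((α - 1) * lm)
      simp only [id_eq, mul_one] at h
      have h' : HasDerivAt (fun y : ℝ => (α - 1) * lm * Real.exp (lm * y))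
          ((α - 1) * lm * (lm * Real.exp (lm * z))) z := by
        exact h.congr_deriv (by ring)
      refine h'.congr_of_eventuallyEq ?_
      filter_upwards [Iio_mem_nhds hneg] with y hy
      rw [if_neg (not_lt.2 (le_of_lt (Set.mem_Iio.mp hy)))]
    have hd1 : deriv U z = (α - 1) * lm * Real.exp (lm * z) := by
      rw [hderiv]; simp only [if_neg (not_lt.2 hneg.le)]
    have hd2 : deriv (deriv U) z = (α - 1) * lm * (lm * Real.exp (lm * z)) := hD.deriv
    have hUz : U z = (α - 1) * Real.exp (lm * z) + 1 := by
      rw [hU z, if_neg (not_lt.2 hneg.le)]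
    have hexp : Real.exp (lm * z) < 1 := by
      rw [Real.exp_lt_one_iff]
      exact mul_neg_of_pos_of_neg hlm hneg
    refine ⟨hD.differentiableAt, ?_⟩
    rw [hd1, hd2, hUz, if_pos (by nlinarith [Real.exp_pos (lm * z)])]
    linear_combination ((α - 1) * Real.exp (lm * z)) * hm
  · have hD : HasDerivAt (deriv U) (α * lp * (lp * Real.exp (lp * z))) z := by
      rw [hderiv]
      have h := (((hasDerivAt_id z).const_mul lp).exp).const_mul (α * lp)
      simp only [id_eq, mul_one] at h
      have h' : HasDerivAt (fun y : ℝ => α * lp * Real.exp (lp * y))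
          (α * lp * (lp * Real.exp (lp * z))) z := by
        exact h.congr_deriv (by ring)
      refine h'.congr_of_eventuallyEq ?_
      filter_upwards [Ioi_mem_nhds hpos] with y hy
      rw [if_pos (Set.mem_Ioi.mp hy)]
    have hd1 : deriv U z = α * lp * Real.exp (lp * z) := by
      rw [hderiv]; simp only [if_pos hpos]
    have hd2 : deriv (deriv U) z = α * lp * (lp * Real.exp (lp * z)) := hD.deriv
    have hUz : U z = α * Real.exp (lp * z) := by rw [hU z, if_pos hpos]
    have hexp : Real.exp (lp * z) < 1 := by
      rw [Real.exp_lt_one_iff]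
      exact mul_neg_of_neg_of_pos hlp hpos
    refine ⟨hD.differentiableAt, ?_⟩
    rw [hd1, hd2, hUz, if_neg (by nlinarith [Real.exp_pos (lp * z)])]
    linear_combination (α * Real.exp (lp * z)) * hp
end

section
/- Let σ, k, χ, C_m, τ be positive reals, let α ∈ (0, 1/2), and set μ = τk/C_m. Then the dimensional front speed v = √(σk/(χC_m²)) · (1 − 2α)/√(μ + (α − α²)(μ − 1)²) satisfies 0 < v < √(σ/(χτC_m)). -/
/-- For positive `σ, k, χ, C_m, τ` and `α ∈ (0, 1/2)`, with
`μ = τk/C_m`, the dimensional front speed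
`v = √(σk/(χC_m²))·(1 − 2α)/√(μ + (α − α²)(μ − 1)²)` satisfies
`0 < v < √(σ/(χτC_m))`. -/
theorem dimensional_front_speed_bound (σ k χ Cm τ α : ℝ)
    (hσ : 0 < σ) (hk : 0 < k) (hχ : 0 < χ) (hCm : 0 < Cm) (hτ : 0 < τ)
    (hα : α ∈ Set.Ioo (0 : ℝ) (1 / 2)) :
    let μ : ℝ := τ * k / Cm
    let v : ℝ := Real.sqrt (σ * k / (χ * Cm ^ 2)) *
      ((1 - 2 * α) / Real.sqrt (μ + (α - α ^ 2) * (μ - 1) ^ 2))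
    0 < v ∧ v < Real.sqrt (σ / (χ * τ * Cm)) := by
  obtain ⟨hα0, hα2⟩ := hα
  intro μ v
  have hμ : 0 < μ := by positivity
  have hαα : 0 < α - α ^ 2 := by nlinarith
  have hD : 0 < μ + (α - α ^ 2) * (μ - 1) ^ 2 := by positivity
  have hc : 0 < 1 - 2 * α := by linarith
  have hA : 0 < σ * k / (χ * Cm ^ 2) := by positivity
  have hv : 0 < v := by
    have h1 : 0 < Real.sqrt (σ * k / (χ * Cm ^ 2)) := Real.sqrt_pos.mpr hA
    have h2 : 0 < Real.sqrt (μ + (α - α ^ 2) * (μ - 1) ^ 2) := Real.sqrt_pos.mpr hD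
    exact mul_pos h1 (div_pos hc h2)
  refine ⟨hv, ?_⟩
  have hB : 0 < σ / (χ * τ * Cm) := by positivity
  rw [show v = Real.sqrt (σ * k / (χ * Cm ^ 2)) *
      ((1 - 2 * α) / Real.sqrt (μ + (α - α ^ 2) * (μ - 1) ^ 2)) from rfl,
    Real.lt_sqrt (le_of_lt hv)] at *
  -- compute v^2
  have hsq : (Real.sqrt (σ * k / (χ * Cm ^ 2)) *
      ((1 - 2 * α) / Real.sqrt (μ + (α - α ^ 2) * (μ - 1) ^ 2))) ^ 2
      = (σ * k / (χ * Cm ^ 2)) * ((1 - 2 * α) ^ 2 / (μ + (α - α ^ 2) * (μ - 1) ^ 2)) := by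
    rw [mul_pow, div_pow, Real.sq_sqrt hA.le, Real.sq_sqrt hD.le]
  rw [hsq]
  have key : μ * (1 - 2 * α) ^ 2 < μ + (α - α ^ 2) * (μ - 1) ^ 2 := by nlinarith [sq_nonneg (μ + 1)]
  have hAB : σ * k / (χ * Cm ^ 2) = (σ / (χ * τ * Cm)) * μ := by
    field_simp [μ]
    show k * τ = Cm * (τ * k / Cm); rw [mul_div_assoc', eq_div_iff hCm.ne']; ring
  rw [hAB]
  calc σ / (χ * τ * Cm) * μ * ((1 - 2 * α) ^ 2 / (μ + (α - α ^ 2) * (μ - 1) ^ 2))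
      = σ / (χ * τ * Cm) * (μ * (1 - 2 * α) ^ 2 / (μ + (α - α ^ 2) * (μ - 1) ^ 2)) := by ring
    _ < σ / (χ * τ * Cm) * 1 := by
        apply mul_lt_mul_of_pos_left _ hB
        rw [div_lt_one hD]; exact key
    _ = σ / (χ * τ * Cm) := mul_one _
end

section
/- Let L_e, L_i, R_e, R_i, χ, C_m be real constants with χ ≠ 0 and R_i + R_e ≠ 0, and let V_e, V_i, I_e, I_i, I_ion : ℝ × ℝ → ℝ be twice continuously differentiable functions of (x, t) satisfying: ∂ₓV_e = −L_e∂ₜI_e − R_e I_e, ∂ₓV_i = −L_i∂ₜI_i − R_i I_i, and ∂ₓI_e = −∂ₓI_i = I_t, where I_t = χ(C_m∂ₜV + I_ion) and V = V_i − V_e. Then V satisfies the hyperbolic cable equation τC_m∂ₜₜV + C_m∂ₜV − D·∂ₓₓV = −I_ion − τ∂ₜI_ion, with conductivity D = 1/(χ(R_i + R_e)) and relaxation time τ = (L_i + L_e)/(R_i + R_e). -/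
/-- The partial derivative in the first (space) variable. -/
noncomputable def pdx (f : ℝ → ℝ → ℝ) (x t : ℝ) : ℝ := deriv (fun y => f y t) x

/-- The partial derivative in the second (time) variable. -/
noncomputable def pdt (f : ℝ → ℝ → ℝ) (x t : ℝ) : ℝ := deriv (fun s => f x s) t

section Helpers
open Function

lemma hasDerivAt_curve_x (x t : ℝ) : HasDerivAt (fun y : ℝ => ((y, t) : ℝ × ℝ)) (1, 0) x :=
  (hasDerivAt_id x).prodMk (hasDerivAt_const x t)

lemma hasDerivAt_curve_t (x t : ℝ) : HasDerivAt (fun s : ℝ => ((x, s) : ℝ × ℝ)) (0, 1) t :=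
  (hasDerivAt_const t x).prodMk (hasDerivAt_id t)

lemma hasDerivAt_pdx_aux (f : ℝ → ℝ → ℝ) (hf : Differentiable ℝ (uncurry f)) (x t : ℝ) :
    HasDerivAt (fun y => f y t) (fderiv ℝ (uncurry f) (x, t) (1, 0)) x :=
  by have := (hf (x, t)).hasFDerivAt.comp_hasDerivAt x (hasDerivAt_curve_x x t); exact this

lemma hasDerivAt_pdt_aux (f : ℝ → ℝ → ℝ) (hf : Differentiable ℝ (uncurry f)) (x t : ℝ) :
    HasDerivAt (fun s => f x s) (fderiv ℝ (uncurry f) (x, t) (0, 1)) t :=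
  by have := (hf (x, t)).hasFDerivAt.comp_hasDerivAt t (hasDerivAt_curve_t x t); exact this

lemma pdx_eq (f : ℝ → ℝ → ℝ) (hf : Differentiable ℝ (uncurry f)) (x t : ℝ) :
    pdx f x t = fderiv ℝ (uncurry f) (x, t) (1, 0) :=
  (hasDerivAt_pdx_aux f hf x t).deriv

lemma pdt_eq (f : ℝ → ℝ → ℝ) (hf : Differentiable ℝ (uncurry f)) (x t : ℝ) :
    pdt f x t = fderiv ℝ (uncurry f) (x, t) (0, 1) :=
  (hasDerivAt_pdt_aux f hf x t).deriv

/-- second derivative along x of a directional derivative -/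
lemma hasDerivAt_snd_x (F : ℝ × ℝ → ℝ) (hf : ContDiff ℝ 2 F) (v : ℝ × ℝ) (x t : ℝ) :
    HasDerivAt (fun y => fderiv ℝ F (y, t) v)
      (fderiv ℝ (fderiv ℝ F) (x, t) (1, 0) v) x := by
  have hd : Differentiable ℝ (fderiv ℝ F) :=
    (hf.fderiv_right (m := 1) (by norm_num)).differentiable (by norm_num)
  have h1 : HasFDerivAt (fun p => fderiv ℝ F p v)
      ((ContinuousLinearMap.apply ℝ ℝ v).comp (fderiv ℝ (fderiv ℝ F) (x, t))) (x, t) :=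
    (ContinuousLinearMap.apply ℝ ℝ v).hasFDerivAt.comp (x, t) (hd (x, t)).hasFDerivAt
  exact h1.comp_hasDerivAt x (hasDerivAt_curve_x x t)

lemma hasDerivAt_snd_t (F : ℝ × ℝ → ℝ) (hf : ContDiff ℝ 2 F) (v : ℝ × ℝ) (x t : ℝ) :
    HasDerivAt (fun s => fderiv ℝ F (x, s) v)
      (fderiv ℝ (fderiv ℝ F) (x, t) (0, 1) v) t := by
  have hd : Differentiable ℝ (fderiv ℝ F) :=
    (hf.fderiv_right (m := 1) (by norm_num)).differentiable (by norm_num)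
  have h1 : HasFDerivAt (fun p => fderiv ℝ F p v)
      ((ContinuousLinearMap.apply ℝ ℝ v).comp (fderiv ℝ (fderiv ℝ F) (x, t))) (x, t) :=
    (ContinuousLinearMap.apply ℝ ℝ v).hasFDerivAt.comp (x, t) (hd (x, t)).hasFDerivAt
  exact h1.comp_hasDerivAt t (hasDerivAt_curve_t x t)

lemma hasDerivAt_pdt_x (f : ℝ → ℝ → ℝ) (hf : ContDiff ℝ 2 (uncurry f)) (x t : ℝ) :
    HasDerivAt (fun y => pdt f y t)
      (fderiv ℝ (fderiv ℝ (uncurry f)) (x, t) (1, 0) (0, 1)) x := by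
  have hd := hf.differentiable (by norm_num)
  have : (fun y => pdt f y t) = fun y => fderiv ℝ (uncurry f) (y, t) (0, 1) :=
    funext fun y => pdt_eq f hd y t
  rw [this]
  exact hasDerivAt_snd_x (uncurry f) hf (0, 1) x t

lemma hasDerivAt_pdx_t (f : ℝ → ℝ → ℝ) (hf : ContDiff ℝ 2 (uncurry f)) (x t : ℝ) :
    HasDerivAt (fun s => pdx f x s)
      (fderiv ℝ (fderiv ℝ (uncurry f)) (x, t) (0, 1) (1, 0)) t := by
  have hd := hf.differentiable (by norm_num)
  have : (fun s => pdx f x s) = fun s => fderiv ℝ (uncurry f) (x, s) (1, 0) :=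
    funext fun s => pdx_eq f hd x s
  rw [this]
  exact hasDerivAt_snd_t (uncurry f) hf (1, 0) x t

lemma hasDerivAt_pdt_t (f : ℝ → ℝ → ℝ) (hf : ContDiff ℝ 2 (uncurry f)) (x t : ℝ) :
    HasDerivAt (fun s => pdt f x s)
      (fderiv ℝ (fderiv ℝ (uncurry f)) (x, t) (0, 1) (0, 1)) t := by
  have hd := hf.differentiable (by norm_num)
  have : (fun s => pdt f x s) = fun s => fderiv ℝ (uncurry f) (x, s) (0, 1) :=
    funext fun s => pdt_eq f hd x s
  rw [this]
  exact hasDerivAt_snd_t (uncurry f) hf (0, 1) x t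

lemma pdt_pdt_eq (f : ℝ → ℝ → ℝ) (hf : ContDiff ℝ 2 (uncurry f)) (x t : ℝ) :
    pdt (pdt f) x t = fderiv ℝ (fderiv ℝ (uncurry f)) (x, t) (0, 1) (0, 1) :=
  (hasDerivAt_pdt_t f hf x t).deriv

lemma pdx_pdt_eq (f : ℝ → ℝ → ℝ) (hf : ContDiff ℝ 2 (uncurry f)) (x t : ℝ) :
    pdx (pdt f) x t = fderiv ℝ (fderiv ℝ (uncurry f)) (x, t) (1, 0) (0, 1) :=
  (hasDerivAt_pdt_x f hf x t).deriv

lemma pdt_pdx_eq (f : ℝ → ℝ → ℝ) (hf : ContDiff ℝ 2 (uncurry f)) (x t : ℝ) :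
    pdt (pdx f) x t = fderiv ℝ (fderiv ℝ (uncurry f)) (x, t) (0, 1) (1, 0) :=
  (hasDerivAt_pdx_t f hf x t).deriv

lemma pdx_pdt_comm (f : ℝ → ℝ → ℝ) (hf : ContDiff ℝ 2 (uncurry f)) (x t : ℝ) :
    pdx (pdt f) x t = pdt (pdx f) x t := by
  rw [pdx_pdt_eq f hf, pdt_pdx_eq f hf]
  exact (hf.contDiffAt.isSymmSndFDerivAt (by simp)) (1, 0) (0, 1)


/-- In the one-dimensional cable model with axial inductances, if the
C² potentials and currents satisfy `∂ₓV_e = −L_e∂ₜI_e − R_e I_e`,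
`∂ₓV_i = −L_i∂ₜI_i − R_i I_i`, and `∂ₓI_e = −∂ₓI_i = I_t` with
`I_t = χ(C_m∂ₜV + I_ion)`, `V = V_i − V_e`, then `V` satisfies the hyperbolic cable
equation `τC_m∂ₜₜV + C_m∂ₜV − D∂ₓₓV = −I_ion − τ∂ₜI_ion`, with
`D = 1/(χ(R_i + R_e))` and `τ = (L_i + L_e)/(R_i + R_e)`. -/
theorem hyperbolic_cable_equation (Le Li Re Ri χ Cm : ℝ)
    (hχ : χ ≠ 0) (hR : Ri + Re ≠ 0)
    (Ve Vi Ie Ii Iion : ℝ → ℝ → ℝ)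
    (hVe : ContDiff ℝ 2 (Function.uncurry Ve))
    (hVi : ContDiff ℝ 2 (Function.uncurry Vi))
    (hIe : ContDiff ℝ 2 (Function.uncurry Ie))
    (hIi : ContDiff ℝ 2 (Function.uncurry Ii))
    (hIion : ContDiff ℝ 2 (Function.uncurry Iion))
    (V : ℝ → ℝ → ℝ) (hV : ∀ x t : ℝ, V x t = Vi x t - Ve x t)
    (It : ℝ → ℝ → ℝ)
    (hIt : ∀ x t : ℝ, It x t = χ * (Cm * pdt V x t + Iion x t))
    (hOhme : ∀ x t : ℝ, pdx Ve x t = -Le * pdt Ie x t - Re * Ie x t)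
    (hOhmi : ∀ x t : ℝ, pdx Vi x t = -Li * pdt Ii x t - Ri * Ii x t)
    (hKCLe : ∀ x t : ℝ, pdx Ie x t = It x t)
    (hKCLi : ∀ x t : ℝ, pdx Ii x t = -It x t) :
    ∀ x t : ℝ,
      ((Li + Le) / (Ri + Re)) * Cm * pdt (pdt V) x t + Cm * pdt V x t
        - (1 / (χ * (Ri + Re))) * pdx (pdx V) x t
      = -Iion x t - ((Li + Le) / (Ri + Re)) * pdt Iion x t := by
  intro x t
  have hdVi := hVi.differentiable (by norm_num)
  have hdVe := hVe.differentiable (by norm_num)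
  have hdIi := hIi.differentiable (by norm_num)
  have hdIe := hIe.differentiable (by norm_num)
  have hdIion := hIion.differentiable (by norm_num)
  have hVC : ContDiff ℝ 2 (uncurry V) := by
    have h : uncurry V = uncurry Vi - uncurry Ve := funext fun p => hV p.1 p.2
    rw [h]; exact hVi.sub hVe
  -- ∂ₓV in terms of currents
  have hpdxV : ∀ y, pdx V y t
      = (-Li * pdt Ii y t - Ri * Ii y t) - (-Le * pdt Ie y t - Re * Ie y t) := by
    intro y
    have h1 : (fun z => V z t) = fun z => Vi z t - Ve z t := funext fun z => hV z t
    have h2 := ((hasDerivAt_pdx_aux Vi hdVi y t).fun_sub (hasDerivAt_pdx_aux Ve hdVe y t)).deriv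
    rw [pdx, h1, h2, ← pdx_eq Vi hdVi, ← pdx_eq Ve hdVe, hOhmi, hOhme]
  -- ∂ₓₓV
  have hpdxxV : pdx (pdx V) x t
      = (-Li * (fderiv ℝ (fderiv ℝ (uncurry Ii)) (x, t) (1, 0) (0, 1))
          - Ri * (fderiv ℝ (uncurry Ii) (x, t) (1, 0)))
        - (-Le * (fderiv ℝ (fderiv ℝ (uncurry Ie)) (x, t) (1, 0) (0, 1))
          - Re * (fderiv ℝ (uncurry Ie) (x, t) (1, 0))) := by
    have h1 : (fun y => pdx V y t)
        = fun y => (-Li * pdt Ii y t - Ri * Ii y t) - (-Le * pdt Ie y t - Re * Ie y t) :=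
      funext fun y => hpdxV y
    rw [pdx, h1]
    exact ((((hasDerivAt_pdt_x Ii hIi x t).const_mul (-Li)).sub
        ((hasDerivAt_pdx_aux Ii hdIi x t).const_mul Ri)).sub
      (((hasDerivAt_pdt_x Ie hIe x t).const_mul (-Le)).sub
        ((hasDerivAt_pdx_aux Ie hdIe x t).const_mul Re))).deriv
  have hswapi : fderiv ℝ (fderiv ℝ (uncurry Ii)) (x, t) (1, 0) (0, 1) = -pdt It x t := by
    rw [← pdx_pdt_eq Ii hIi, pdx_pdt_comm Ii hIi]
    have h : (fun s => pdx Ii x s) = fun s => -(It x s) := funext fun s => hKCLi x s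
    rw [pdt, h, deriv.fun_neg]; rfl
  have hswape : fderiv ℝ (fderiv ℝ (uncurry Ie)) (x, t) (1, 0) (0, 1) = pdt It x t := by
    rw [← pdx_pdt_eq Ie hIe, pdx_pdt_comm Ie hIe]
    have h : (fun s => pdx Ie x s) = fun s => It x s := funext fun s => hKCLe x s
    rw [pdt, h]; rfl
  have hIix : fderiv ℝ (uncurry Ii) (x, t) (1, 0) = -It x t := by
    rw [← pdx_eq Ii hdIi, hKCLi]
  have hIex : fderiv ℝ (uncurry Ie) (x, t) (1, 0) = It x t := by
    rw [← pdx_eq Ie hdIe, hKCLe]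
  rw [hswapi, hswape, hIix, hIex] at hpdxxV
  -- ∂ₜ It
  have hpdtIt : pdt It x t = χ * (Cm * pdt (pdt V) x t + pdt Iion x t) := by
    have h1 : (fun s => It x s) = fun s => χ * (Cm * pdt V x s + Iion x s) :=
      funext fun s => hIt x s
    have h2 := ((((hasDerivAt_pdt_t V hVC x t).const_mul Cm).fun_add
      (hasDerivAt_pdt_aux Iion hdIion x t)).const_mul χ).deriv
    rw [pdt, h1, h2, ← pdt_pdt_eq V hVC, ← pdt_eq Iion hdIion]
  rw [hpdtIt] at hpdxxV
  rw [hpdxxV, hIt x t]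
  field_simp
  ring

end Helpers
end
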